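/- Let α^(1),…,α^(ℓ) be compositions of n_1,…,n_ℓ (all positive), let N = n_1+⋯+n_ℓ, let p_j := n_1+⋯+n_j for 1 ≤ j ≤ ℓ−1, let P := {p_1,…,p_{ℓ−1}}, and let D := ⋃_{j=1}^ℓ {n_1+⋯+n_{j−1} + d : d ∈ Des(α^(j))} ⊆ {1,…,N−1} \ P. Then the number of permutations w of {1,…,N} with Des(w) \ P = D equals the multinomial coefficient N!/(n_1!⋯n_ℓ!) times the product f^{α^(1)} f^{α^(2)} ⋯ f^{α^(ℓ)}. (This is the dimension of the generalized ribbon projective module P_{(α^(1),…,α^(ℓ))} induced from the parabolic subalgebra.) -/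
import Mathlib


/-- The descent set of a composition `α = (α₁,…,α_ℓ)`: the partial sums
`α₁+⋯+α_i` for `1 ≤ i < ℓ`. -/
def Des (α : List ℕ) : Finset ℕ :=
  ((List.range (α.length - 1)).map (fun i => (α.take (i + 1)).sum)).toFinset

/-- The descent set of a permutation `w` of `{1,…,N}` (realized as `Equiv.Perm (Fin N)` in
0-based indexing): the set of `i ∈ {1,…,N−1}` with `w(i) > w(i+1)` in one-line notation. -/
def permDes {N : ℕ} (w : Equiv.Perm (Fin N)) : Finset ℕ :=
  Finset.image (fun i : Fin (N - 1) => (i : ℕ) + 1)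
    (Finset.univ.filter
      (fun i : Fin (N - 1) => w ⟨(i : ℕ) + 1, by omega⟩ < w ⟨(i : ℕ), by omega⟩))

/-- `fNum N E` is the number of permutations of `{1,…,N}` with descent set `E`;
for a composition `γ ⊨ N`, `fNum N (Des γ)` is `f^γ`. -/
def fNum (N : ℕ) (E : Finset ℕ) : ℕ :=
  (Finset.univ.filter (fun w : Equiv.Perm (Fin N) => permDes w = E)).card

/-- For a sequence of compositions `A = (α⁽¹⁾,…,α⁽ℓ⁾)` of sizes `n₁,…,n_ℓ`, the partial sum
`p_j = n₁+⋯+n_j` (here `j` ranges over `1 ≤ j ≤ ℓ−1` in the statements below). -/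
def pval (A : List (List ℕ)) (j : ℕ) : ℕ := ((A.take j).flatten).sum

/-- `P := {p₁,…,p_{ℓ−1}}`. -/
def Pset (A : List (List ℕ)) : Finset ℕ :=
  Finset.image (pval A) (Finset.Icc 1 (A.length - 1))

/-- `D := ⋃_{j=1}^ℓ {n₁+⋯+n_{j−1} + d : d ∈ Des(α⁽ʲ⁾)}` (0-based `j` below). -/
def Dset (A : List (List ℕ)) : Finset ℕ :=
  (Finset.range A.length).biUnion
    (fun j => (Des (A.getD j [])).image (fun d => ((A.take j).flatten).sum + d))


lemma permDes_subset {N : ℕ} (w : Equiv.Perm (Fin N)) : permDes w ⊆ Finset.Ioo 0 N := by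
  intro x hx
  simp only [permDes, Finset.mem_image, Finset.mem_filter] at hx
  obtain ⟨i, hi, rfl⟩ := hx
  have := i.isLt
  simp only [Finset.mem_Ioo]
  omega

lemma mem_permDes {N : ℕ} (w : Equiv.Perm (Fin N)) (x : ℕ) (h0 : 0 < x) (hN : x < N) :
    x ∈ permDes w ↔ w ⟨x, hN⟩ < w ⟨x - 1, by omega⟩ := by
  simp only [permDes, Finset.mem_image, Finset.mem_filter, Finset.mem_univ, true_and]
  constructor
  · rintro ⟨i, hi, rfl⟩
    convert hi using 2 <;> exact Fin.ext (by simp)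
  · intro h
    refine ⟨⟨x - 1, by omega⟩, ?_, by simp; omega⟩
    convert h using 2 <;> exact Fin.ext (by simp <;> omega)

section
variable {m n : ℕ}

def blockEquiv (A : Finset (Fin (m + n))) (hA : A.card = m) : Fin m ⊕ Fin n ≃ Fin (m + n) :=
  have hA' : Aᶜ.card = n := by
    rw [Finset.card_compl, hA]; simp
  (Equiv.sumCongr (A.orderIsoOfFin hA).toEquiv
    ((Aᶜ.orderIsoOfFin hA').toEquiv.trans (Equiv.subtypeEquivRight (by intro x; simp)))).trans
    (Equiv.sumCompl (· ∈ A))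

def phi (A : Finset (Fin (m + n))) (hA : A.card = m) (u : Equiv.Perm (Fin m))
    (v : Equiv.Perm (Fin n)) : Equiv.Perm (Fin (m + n)) :=
  (finSumFinEquiv.symm.trans (Equiv.sumCongr u v)).trans (blockEquiv A hA)

lemma phi_apply_castAdd (A : Finset (Fin (m + n))) (hA : A.card = m) (u : Equiv.Perm (Fin m))
    (v : Equiv.Perm (Fin n)) (i : Fin m) :
    phi A hA u v (Fin.castAdd n i) = (A.orderIsoOfFin hA (u i) : Fin (m + n)) := by
  simp [phi, blockEquiv]

lemma phi_apply_natAdd (A : Finset (Fin (m + n))) (hA : A.card = m) (u : Equiv.Perm (Fin m))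
    (v : Equiv.Perm (Fin n)) (i : Fin n) :
    phi A hA u v (Fin.natAdd m i)
      = ((Aᶜ.orderIsoOfFin (by rw [Finset.card_compl, hA]; simp) (v i) : Fin (m + n))) := by
  simp [phi, blockEquiv]

end

section
variable {m n : ℕ}

lemma phi_apply_lt (A : Finset (Fin (m + n))) (hA : A.card = m) (u : Equiv.Perm (Fin m))
    (v : Equiv.Perm (Fin n)) (i : Fin (m + n)) (h : (i : ℕ) < m) :
    phi A hA u v i = (A.orderIsoOfFin hA (u ⟨i, h⟩) : Fin (m + n)) := by
  have hi : i = Fin.castAdd n ⟨(i : ℕ), h⟩ := Fin.ext rfl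
  conv_lhs => rw [hi]
  rw [phi_apply_castAdd]

lemma phi_apply_ge (A : Finset (Fin (m + n))) (hA : A.card = m) (u : Equiv.Perm (Fin m))
    (v : Equiv.Perm (Fin n)) (i : Fin (m + n)) (h : m ≤ (i : ℕ)) :
    phi A hA u v i
      = ((Aᶜ.orderIsoOfFin (by rw [Finset.card_compl, hA]; simp)
          (v ⟨(i : ℕ) - m, by have := i.isLt; omega⟩) : Fin (m + n))) := by
  have hi : i = Fin.natAdd m ⟨(i : ℕ) - m, by have := i.isLt; omega⟩ := Fin.ext (by simp; omega)
  conv_lhs => rw [hi]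
  rw [phi_apply_natAdd]

lemma orderIsoOfFin_lt_iff {N k : ℕ} (s : Finset (Fin N)) (h : s.card = k) (a b : Fin k) :
    (s.orderIsoOfFin h a : Fin N) < (s.orderIsoOfFin h b : Fin N) ↔ a < b := by
  rw [Subtype.coe_lt_coe, OrderIso.lt_iff_lt]

end

section
variable {m n : ℕ}

lemma permDes_phi (A : Finset (Fin (m + n))) (hA : A.card = m) (u : Equiv.Perm (Fin m))
    (v : Equiv.Perm (Fin n)) (hm : 0 < m) (hn : 0 < n) :
    permDes (phi A hA u v) \ {m} = permDes u ∪ (permDes v).image (· + m) := by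
  have hu := permDes_subset u
  have hv := permDes_subset v
  have hw := permDes_subset (phi A hA u v)
  ext x
  simp only [Finset.mem_sdiff, Finset.mem_singleton, Finset.mem_union, Finset.mem_image]
  rcases Nat.lt_trichotomy x m with hxm | rfl | hxm
  · rcases Nat.eq_zero_or_pos x with rfl | hx0
    · constructor
      · rintro ⟨h, -⟩; exact absurd (Finset.mem_Ioo.mp (hw h)).1 (by omega)
      · rintro (h | ⟨d, hd, hdm⟩)
        · exact absurd (Finset.mem_Ioo.mp (hu h)).1 (by omega)
        · omega
    · have hxN : x < m + n := by omega
      have key : x ∈ permDes (phi A hA u v) ↔ x ∈ permDes u := by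
        rw [mem_permDes _ x hx0 hxN, mem_permDes u x hx0 hxm,
          phi_apply_lt A hA u v _ (by simpa using hxm),
          phi_apply_lt A hA u v _ (by simp; omega), orderIsoOfFin_lt_iff]
      constructor
      · rintro ⟨h, -⟩; exact Or.inl (key.mp h)
      · rintro (h | ⟨d, hd, hdm⟩)
        · exact ⟨key.mpr h, by omega⟩
        · omega
  · constructor
    · rintro ⟨-, h⟩; omega
    · rintro (h | ⟨d, hd, hdm⟩)
      · exact absurd (Finset.mem_Ioo.mp (hu h)).2 (by omega)
      · have := (Finset.mem_Ioo.mp (hv hd)).1; omega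
  · rcases Nat.lt_or_ge x (m + n) with hxN | hxN
    · have hx0 : 0 < x := by omega
      have key : x ∈ permDes (phi A hA u v) ↔ (x - m) ∈ permDes v := by
        rw [mem_permDes _ x hx0 hxN, mem_permDes v (x - m) (by omega) (by omega),
          phi_apply_ge A hA u v _ (by simp; omega),
          phi_apply_ge A hA u v _ (by simp; omega), orderIsoOfFin_lt_iff]
        constructor <;> intro h <;>
          · convert h using 2 <;> exact Fin.ext (by simp; omega)
      constructor
      · rintro ⟨h, -⟩; exact Or.inr ⟨x - m, key.mp h, by omega⟩
      · rintro (h | ⟨d, hd, hdm⟩)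
        · exact absurd (Finset.mem_Ioo.mp (hu h)).2 (by omega)
        · refine ⟨key.mpr (by convert hd using 1; omega), by omega⟩
    · constructor
      · rintro ⟨h, -⟩; exact absurd (Finset.mem_Ioo.mp (hw h)).2 (by omega)
      · rintro (h | ⟨d, hd, hdm⟩)
        · exact absurd (Finset.mem_Ioo.mp (hu h)).2 (by omega)
        · have := (Finset.mem_Ioo.mp (hv hd)).2; omega

end

section
variable {m n : ℕ}

lemma phi_image (A : Finset (Fin (m + n))) (hA : A.card = m) (u : Equiv.Perm (Fin m))
    (v : Equiv.Perm (Fin n)) :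
    Finset.image (fun i : Fin m => phi A hA u v (Fin.castAdd n i)) Finset.univ = A := by
  ext x
  simp only [Finset.mem_image, Finset.mem_univ, true_and, phi_apply_castAdd]
  constructor
  · rintro ⟨i, rfl⟩; exact Subtype.coe_prop _
  · intro hx
    refine ⟨u.symm ((A.orderIsoOfFin hA).symm ⟨x, hx⟩), ?_⟩
    simp

lemma phi_inj (A A' : Finset (Fin (m + n))) (hA : A.card = m) (hA' : A'.card = m)
    (u u' : Equiv.Perm (Fin m)) (v v' : Equiv.Perm (Fin n))
    (h : phi A hA u v = phi A' hA' u' v') : A = A' ∧ u = u' ∧ v = v' := by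
  have hAA : A = A' := by
    rw [← phi_image A hA u v, h, phi_image]
  subst hAA
  refine ⟨rfl, ?_, ?_⟩
  · ext i
    have := congrFun (congrArg (fun (e : Equiv.Perm (Fin (m+n))) => (e : Fin (m+n) → Fin (m+n))) h) (Fin.castAdd n i)
    simp only [phi_apply_castAdd] at this
    have h2 : (A.orderIsoOfFin hA) (u i) = (A.orderIsoOfFin hA') (u' i) := Subtype.ext this
    have h3 := (A.orderIsoOfFin hA).injective (by exact h2)
    exact congrArg Fin.val h3
  · ext i
    have := congrFun (congrArg (fun (e : Equiv.Perm (Fin (m+n))) => (e : Fin (m+n) → Fin (m+n))) h) (Fin.natAdd m i)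
    simp only [phi_apply_natAdd] at this
    have hc : Aᶜ.card = n := by rw [Finset.card_compl, hA]; simp
    have h3 : v i = v' i := by
      apply (Aᶜ.orderIsoOfFin hc).injective
      apply Subtype.ext
      exact this
    exact congrArg Fin.val h3

lemma phi_surj (w : Equiv.Perm (Fin (m + n))) :
    ∃ (A : Finset (Fin (m + n))) (hA : A.card = m) (u : Equiv.Perm (Fin m))
      (v : Equiv.Perm (Fin n)), phi A hA u v = w := by
  have hcast : Function.Injective (fun i : Fin m => w (Fin.castAdd n i)) := by
    intro i j hij
    exact Fin.castAdd_inj.mp (w.injective hij)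
  set A : Finset (Fin (m + n)) := Finset.image (fun i : Fin m => w (Fin.castAdd n i)) Finset.univ
    with hAdef
  have hA : A.card = m := by
    rw [hAdef, Finset.card_image_of_injective _ hcast, Finset.card_univ, Fintype.card_fin]
  have hmemA : ∀ i : Fin m, w (Fin.castAdd n i) ∈ A := by
    intro i; rw [hAdef]; exact Finset.mem_image_of_mem _ (Finset.mem_univ i)
  have hmemAc : ∀ k : Fin n, w (Fin.natAdd m k) ∈ Aᶜ := by
    intro k
    rw [Finset.mem_compl, hAdef]
    intro hk
    simp only [Finset.mem_image, Finset.mem_univ, true_and] at hk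
    obtain ⟨i, hi⟩ := hk
    have := congrArg Fin.val (w.injective hi)
    simp at this
    omega
  set u0 : Fin m → Fin m := fun i => (A.orderIsoOfFin hA).symm ⟨w (Fin.castAdd n i), hmemA i⟩
    with hu0
  have hu0inj : Function.Injective u0 := by
    intro i j hij
    have h1 := congrArg (Subtype.val) ((A.orderIsoOfFin hA).symm.injective hij)
    exact Fin.castAdd_inj.mp (w.injective h1)
  set v0 : Fin n → Fin n := fun k =>
    (Aᶜ.orderIsoOfFin (by rw [Finset.card_compl, hA]; simp)).symm ⟨w (Fin.natAdd m k), hmemAc k⟩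
    with hv0
  have hv0inj : Function.Injective v0 := by
    intro i j hij
    have h1 := congrArg (Subtype.val)
      ((Aᶜ.orderIsoOfFin (by rw [Finset.card_compl, hA]; simp)).symm.injective hij)
    have h2 := congrArg Fin.val (w.injective h1)
    simp only [Fin.coe_natAdd] at h2
    exact Fin.ext (by omega)
  refine ⟨A, hA, Equiv.ofBijective u0 (Finite.injective_iff_bijective.mp hu0inj),
    Equiv.ofBijective v0 (Finite.injective_iff_bijective.mp hv0inj), ?_⟩
  ext i
  rcases Nat.lt_or_ge (i : ℕ) m with h | h
  · rw [phi_apply_lt _ _ _ _ _ h]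
    have : (Equiv.ofBijective u0 (Finite.injective_iff_bijective.mp hu0inj)) ⟨(i : ℕ), h⟩
        = u0 ⟨(i : ℕ), h⟩ := rfl
    rw [this, hu0]
    simp only [OrderIso.apply_symm_apply]
    show ((w (Fin.castAdd n ⟨(i : ℕ), h⟩) : Fin (m + n)) : ℕ) = ((w i : Fin (m + n)) : ℕ)
    exact congrArg Fin.val (congrArg w (Fin.ext (by simp)))
  · rw [phi_apply_ge _ _ _ _ _ h]
    have : (Equiv.ofBijective v0 (Finite.injective_iff_bijective.mp hv0inj))
          ⟨(i : ℕ) - m, by have := i.isLt; omega⟩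
        = v0 ⟨(i : ℕ) - m, by have := i.isLt; omega⟩ := rfl
    rw [this, hv0]
    simp only [OrderIso.apply_symm_apply]
    show ((w (Fin.natAdd m ⟨(i : ℕ) - m, by have := i.isLt; omega⟩) : Fin (m + n)) : ℕ)
        = ((w i : Fin (m + n)) : ℕ)
    exact congrArg Fin.val (congrArg w (Fin.ext (by simp; omega)))

end

lemma union_split {X X' Y Y' P : Finset ℕ} {m : ℕ} (hX : X ⊆ Finset.Ioo 0 m)
    (hX' : X' ⊆ Finset.Ioo 0 m) (hP : P ⊆ Finset.Ioo 0 m) :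
    (X ∪ Y.image (· + m)) \ P = X' ∪ Y'.image (· + m) ↔ X \ P = X' ∧ Y = Y' := by
  constructor
  · intro h
    have key : ∀ x, ((x ∈ X ∨ ∃ y ∈ Y, y + m = x) ∧ x ∉ P) ↔
        (x ∈ X' ∨ ∃ y ∈ Y', y + m = x) := by
      intro x
      have := Finset.ext_iff.mp h x
      simpa [Finset.mem_sdiff, Finset.mem_union, Finset.mem_image] using this
    constructor
    · ext x
      simp only [Finset.mem_sdiff]
      constructor
      · rintro ⟨hxX, hxP⟩
        have hxm := (Finset.mem_Ioo.mp (hX hxX)).2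
        rcases (key x).mp ⟨Or.inl hxX, hxP⟩ with h' | ⟨y, hy, hyx⟩
        · exact h'
        · omega
      · intro hxX'
        have hxm := (Finset.mem_Ioo.mp (hX' hxX')).2
        rcases (key x).mpr (Or.inl hxX') with ⟨h1 | ⟨y, hy, hyx⟩, h2⟩
        · exact ⟨h1, h2⟩
        · omega
    · ext y
      constructor
      · intro hy
        have hnP : y + m ∉ P := fun hc => by have := (Finset.mem_Ioo.mp (hP hc)).2; omega
        rcases (key (y + m)).mp ⟨Or.inr ⟨y, hy, rfl⟩, hnP⟩ with h' | ⟨y', hy', hyx⟩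
        · have := (Finset.mem_Ioo.mp (hX' h')).2; omega
        · have : y' = y := by omega
          subst this; exact hy'
      · intro hy
        rcases (key (y + m)).mpr (Or.inr ⟨y, hy, rfl⟩) with ⟨h1 | ⟨y', hy', hyx⟩, -⟩
        · have := (Finset.mem_Ioo.mp (hX h1)).2; omega
        · have : y' = y := by omega
          subst this; exact hy'
  · rintro ⟨h1, rfl⟩
    rw [Finset.union_sdiff_distrib, h1, Finset.sdiff_eq_self_of_disjoint]
    rw [Finset.disjoint_left]
    intro x hx hxP
    simp only [Finset.mem_image] at hx
    obtain ⟨y, hy, rfl⟩ := hx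
    have := (Finset.mem_Ioo.mp (hP hxP)).2
    omega

lemma split_count (m n : ℕ) (hm : 0 < m) (hn : 0 < n) (P D₁ D₂ : Finset ℕ)
    (hP : P ⊆ Finset.Ioo 0 m) (hD₁ : D₁ ⊆ Finset.Ioo 0 m) :
    (Finset.univ.filter (fun w : Equiv.Perm (Fin (m + n)) =>
        permDes w \ insert m P = D₁ ∪ D₂.image (· + m))).card
      = (m + n).choose m
        * (Finset.univ.filter (fun u : Equiv.Perm (Fin m) => permDes u \ P = D₁)).card
        * (Finset.univ.filter (fun v : Equiv.Perm (Fin n) => permDes v = D₂)).card := by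
  classical
  have hsdiff : ∀ (s : Finset ℕ), s \ insert m P = (s \ {m}) \ P := by
    intro s; ext x; simp only [Finset.mem_sdiff, Finset.mem_insert, Finset.mem_singleton]; tauto
  have keyiff : ∀ (A : Finset (Fin (m + n))) (hA : A.card = m) (u : Equiv.Perm (Fin m))
      (v : Equiv.Perm (Fin n)),
      (permDes (phi A hA u v) \ insert m P = D₁ ∪ D₂.image (· + m))
        ↔ (permDes u \ P = D₁ ∧ permDes v = D₂) := by
    intro A hA u v
    rw [hsdiff, permDes_phi A hA u v hm hn]
    exact union_split (permDes_subset u) hD₁ hP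
  rw [show (m + n).choose m
        * (Finset.univ.filter (fun u : Equiv.Perm (Fin m) => permDes u \ P = D₁)).card
        * (Finset.univ.filter (fun v : Equiv.Perm (Fin n) => permDes v = D₂)).card
      = ((Finset.univ.powersetCard m (α := Fin (m + n))) ×ˢ
          ((Finset.univ.filter (fun u : Equiv.Perm (Fin m) => permDes u \ P = D₁)) ×ˢ
           (Finset.univ.filter (fun v : Equiv.Perm (Fin n) => permDes v = D₂)))).card by
    rw [Finset.card_product, Finset.card_product, Finset.card_powersetCard, Finset.card_univ,
      Fintype.card_fin, mul_assoc]]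
  symm
  apply Finset.card_bij (i := fun (p : Finset (Fin (m + n)) ×
      (Equiv.Perm (Fin m) × Equiv.Perm (Fin n))) hp =>
    phi p.1 (by
      have := (Finset.mem_product.mp hp).1
      exact (Finset.mem_powersetCard.mp this).2) p.2.1 p.2.2)
  · intro p hp
    have h1 := (Finset.mem_product.mp hp).2
    have h2 := (Finset.mem_product.mp h1).1
    have h3 := (Finset.mem_product.mp h1).2
    simp only [Finset.mem_filter, Finset.mem_univ, true_and] at h2 h3 ⊢
    exact (keyiff _ _ _ _).mpr ⟨h2, h3⟩
  · intro p hp q hq hpq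
    obtain ⟨hA, hu, hv⟩ := phi_inj _ _ _ _ _ _ _ _ hpq
    exact Prod.ext hA (Prod.ext hu hv)
  · intro w hw
    simp only [Finset.mem_filter, Finset.mem_univ, true_and] at hw
    obtain ⟨A, hA, u, v, hphi⟩ := phi_surj (m := m) (n := n) w
    refine ⟨(A, u, v), ?_, hphi⟩
    rw [← hphi] at hw
    obtain ⟨hu, hv⟩ := (keyiff A hA u v).mp hw
    refine Finset.mem_product.mpr ⟨?_, Finset.mem_product.mpr ⟨?_, ?_⟩⟩
    · exact Finset.mem_powersetCard.mpr ⟨Finset.subset_univ _, hA⟩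
    · simp [hu]
    · simp [hv]

lemma Des_subset {γ : List ℕ} (hne : γ ≠ []) (hpos : ∀ a ∈ γ, 0 < a) :
    Des γ ⊆ Finset.Ioo 0 γ.sum := by
  intro d hd
  simp only [Des, List.mem_toFinset, List.mem_map, List.mem_range] at hd
  obtain ⟨i, hi, rfl⟩ := hd
  have hlen : 0 < γ.length := List.length_pos_iff.mpr hne
  have h1 : 0 < (γ.take (i + 1)).sum := by
    apply List.sum_pos
    · exact fun x hx => hpos x (List.take_subset _ _ hx)
    · intro hc
      have h := congrArg List.length hc
      rw [List.length_take] at h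
      simp at h
      exact hne h
  have h2 : (γ.take (i + 1)).sum < γ.sum := by
    conv_rhs => rw [← List.take_append_drop (i + 1) γ]
    rw [List.sum_append]
    have : 0 < (γ.drop (i + 1)).sum := by
      apply List.sum_pos
      · exact fun x hx => hpos x (List.drop_subset _ _ hx)
      · rw [Ne, List.drop_eq_nil_iff]
        omega
    omega
  exact Finset.mem_Ioo.mpr ⟨h1, h2⟩

lemma sum_getD (B : List (List ℕ)) :
    ∑ j ∈ Finset.range B.length, (B.getD j []).sum = B.flatten.sum := by
  induction B with
  | nil => simp
  | cons b B ih =>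
    rw [List.length_cons, Finset.sum_range_succ']
    simp only [List.getD_cons_succ, List.getD_cons_zero, List.flatten_cons, List.sum_append]
    rw [ih]; ring

lemma take_flatten_sum_succ {B : List (List ℕ)} {j : ℕ} (hj : j < B.length) :
    ((B.take (j + 1)).flatten).sum = ((B.take j).flatten).sum + (B.getD j []).sum := by
  rw [List.take_succ, List.flatten_append, List.sum_append]
  congr 1
  have h : B[j]? = some B[j] := List.getElem?_eq_getElem hj
  rw [List.getD_eq_getElem _ _ hj, h]
  simp

lemma take_flatten_sum_le (B : List (List ℕ)) (j : ℕ) :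
    ((B.take j).flatten).sum ≤ B.flatten.sum := by
  conv_rhs => rw [← List.take_append_drop j B]
  rw [List.flatten_append, List.sum_append]
  omega

lemma block_sum_pos {B : List (List ℕ)} (hcomp : ∀ α ∈ B, α ≠ [] ∧ ∀ a ∈ α, 0 < a) {j : ℕ}
    (hj : j < B.length) : 0 < (B.getD j []).sum := by
  have hmem : B.getD j [] ∈ B := by
    rw [List.getD_eq_getElem _ _ hj]
    exact List.getElem_mem _
  obtain ⟨h1, h2⟩ := hcomp _ hmem
  exact List.sum_pos _ h2 h1

lemma take_flatten_mono (B : List (List ℕ)) {i j : ℕ} (hij : i ≤ j) :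
    ((B.take i).flatten).sum ≤ ((B.take j).flatten).sum := by
  have := take_flatten_sum_le (B.take j) i
  rwa [List.take_take, min_eq_left hij] at this

lemma Pset_subset {B : List (List ℕ)} (hcomp : ∀ α ∈ B, α ≠ [] ∧ ∀ a ∈ α, 0 < a) :
    Pset B ⊆ Finset.Ioo 0 B.flatten.sum := by
  intro x hx
  simp only [Pset, pval, Finset.mem_image, Finset.mem_Icc] at hx
  obtain ⟨j, ⟨hj1, hj2⟩, rfl⟩ := hx
  have hjlen : j < B.length := by
    rcases Nat.eq_zero_or_pos B.length with h | h
    · omega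
    · omega
  have hpos0 : 0 < ((B.take 1).flatten).sum := by
    rw [take_flatten_sum_succ (by omega)]
    have := block_sum_pos hcomp (j := 0) (by omega)
    simp only [List.take_zero, List.flatten_nil, List.sum_nil]
    omega
  refine Finset.mem_Ioo.mpr ⟨?_, ?_⟩
  · have := take_flatten_mono B hj1
    omega
  · have ha : ((B.take j).flatten).sum < ((B.take (j + 1)).flatten).sum := by
      rw [take_flatten_sum_succ hjlen]
      have := block_sum_pos hcomp hjlen
      omega
    have hb := take_flatten_sum_le B (j + 1)
    omega

lemma Dset_subset {B : List (List ℕ)} (hcomp : ∀ α ∈ B, α ≠ [] ∧ ∀ a ∈ α, 0 < a) :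
    Dset B ⊆ Finset.Ioo 0 B.flatten.sum := by
  intro x hx
  simp only [Dset, Finset.mem_biUnion, Finset.mem_range, Finset.mem_image] at hx
  obtain ⟨j, hj, d, hd, rfl⟩ := hx
  have hmem : B.getD j [] ∈ B := by
    rw [List.getD_eq_getElem _ _ hj]; exact List.getElem_mem _
  obtain ⟨h1, h2⟩ := hcomp _ hmem
  have hdIoo := Finset.mem_Ioo.mp (Des_subset h1 h2 hd)
  refine Finset.mem_Ioo.mpr ⟨by omega, ?_⟩
  calc ((B.take j).flatten).sum + d < ((B.take j).flatten).sum + (B.getD j []).sum := by omega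
  _ = ((B.take (j + 1)).flatten).sum := (take_flatten_sum_succ hj).symm
  _ ≤ _ := take_flatten_sum_le B (j + 1)

lemma Pset_append {B : List (List ℕ)} {α : List ℕ} (hne : B ≠ []) :
    Pset (B ++ [α]) = insert B.flatten.sum (Pset B) := by
  have hlen : 0 < B.length := List.length_pos_iff.mpr hne
  ext x
  simp only [Pset, Finset.mem_image, Finset.mem_Icc, Finset.mem_insert, List.length_append,
    List.length_singleton, pval]
  constructor
  · rintro ⟨j, ⟨hj1, hj2⟩, rfl⟩
    rcases Nat.lt_or_ge j B.length with h | h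
    · right
      exact ⟨j, ⟨hj1, by omega⟩, by rw [List.take_append_of_le_length (by omega)]⟩
    · left
      have hj : j = B.length := by omega
      subst hj
      rw [List.take_append_of_le_length (le_refl _)]
      simp
  · rintro (rfl | ⟨j, ⟨hj1, hj2⟩, rfl⟩)
    · exact ⟨B.length, ⟨by omega, by omega⟩, by
        rw [List.take_append_of_le_length (le_refl _)]; simp⟩
    · exact ⟨j, ⟨hj1, by omega⟩, by rw [List.take_append_of_le_length (by omega)]⟩

lemma Dset_append {B : List (List ℕ)} {α : List ℕ} :
    Dset (B ++ [α]) = Dset B ∪ (Des α).image (fun d => B.flatten.sum + d) := by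
  simp only [Dset, List.length_append, List.length_singleton, Finset.range_add_one,
    Finset.biUnion_insert]
  rw [Finset.union_comm]
  have h1 : (Finset.range B.length).biUnion
      (fun j => (Des ((B ++ [α]).getD j [])).image (fun d => (((B ++ [α]).take j).flatten).sum + d))
      = (Finset.range B.length).biUnion
      (fun j => (Des (B.getD j [])).image (fun d => ((B.take j).flatten).sum + d)) := by
    apply Finset.biUnion_congr rfl
    intro j hj
    rw [Finset.mem_range] at hj
    rw [List.getD_append _ _ _ _ hj, List.take_append_of_le_length (le_of_lt hj)]
  have h2 : (Des ((B ++ [α]).getD B.length [])).image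
      (fun d => (((B ++ [α]).take B.length).flatten).sum + d)
      = (Des α).image (fun d => B.flatten.sum + d) := by
    have e1 : (B ++ [α]).getD B.length [] = α := by simp
    have e2 : (B ++ [α]).take B.length = B := by
      rw [List.take_append_of_le_length (le_refl _)]
      simp
    rw [e1, e2]
  rw [h1, h2]

lemma multinomial_congr' {s : Finset ℕ} {f g : ℕ → ℕ} (h : ∀ i ∈ s, f i = g i) :
    Nat.multinomial s f = Nat.multinomial s g := by
  unfold Nat.multinomial
  rw [Finset.sum_congr rfl h, Finset.prod_congr rfl (fun i hi => by rw [h i hi])]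

lemma card_congr_sdiff {N N' : ℕ} (h : N = N') (P D : Finset ℕ) :
    (Finset.univ.filter (fun w : Equiv.Perm (Fin N) => permDes w \ P = D)).card
      = (Finset.univ.filter (fun w : Equiv.Perm (Fin N') => permDes w \ P = D)).card := by
  subst h; rfl


/-- the number of permutations `w` of `{1,…,N}` with `Des(w) \ P = D` equals the
multinomial coefficient `N!/(n₁!⋯n_ℓ!)` times `f^{α⁽¹⁾} ⋯ f^{α⁽ℓ⁾}`. -/
theorem dimension_of_generalized_ribbon_projective (A : List (List ℕ)) (hA : A ≠ [])
    (hcomp : ∀ α ∈ A, α ≠ [] ∧ ∀ a ∈ α, 0 < a) :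
    (Finset.univ.filter (fun w : Equiv.Perm (Fin A.flatten.sum) =>
        permDes w \ Pset A = Dset A)).card
      = Nat.multinomial (Finset.range A.length) (fun j => (A.getD j []).sum)
          * (A.map (fun α => fNum α.sum (Des α))).prod := by
  revert hA hcomp
  induction A using List.reverseRecOn with
  | nil => intro hA _; exact absurd rfl hA
  | append_singleton B α ih =>
    intro hA hcomp
    rcases eq_or_ne B [] with rfl | hB
    · -- base case A = [α]
      have hPs : Pset [α] = ∅ := by simp [Pset]
      have hDs : Dset [α] = Des α := by simp [Dset]
      simp only [List.nil_append] at *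
      simp only [hPs, hDs]
      rw [card_congr_sdiff (show ([α] : List (List ℕ)).flatten.sum = α.sum by simp) ∅ (Des α)]
      simp only [Finset.sdiff_empty]
      simp [fNum, Finset.range_one]
    · -- inductive step
      have hcompB : ∀ β ∈ B, β ≠ [] ∧ ∀ a ∈ β, 0 < a := by
        intro β hβ; exact hcomp β (by simp [hβ])
      have hcompα := hcomp α (by simp)
      have hn : 0 < α.sum := List.sum_pos _ hcompα.2 hcompα.1
      have hBlen : 0 < B.length := List.length_pos_iff.mpr hB
      have hM : 0 < B.flatten.sum := by
        have h1 := take_flatten_sum_le B 1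
        have h2 : ((B.take 1).flatten).sum = ((B.take 0).flatten).sum + (B.getD 0 []).sum :=
          take_flatten_sum_succ hBlen
        have h3 := block_sum_pos hcompB (j := 0) hBlen
        simp only [List.take_zero, List.flatten_nil, List.sum_nil] at h2
        omega
      have hNsum : (B ++ [α]).flatten.sum = B.flatten.sum + α.sum := by simp
      have himg : (Des α).image (fun d => B.flatten.sum + d)
          = (Des α).image (· + B.flatten.sum) :=
        Finset.image_congr (fun d _ => add_comm _ _)
      simp only [Pset_append hB, Dset_append, himg]
      rw [card_congr_sdiff hNsum (insert B.flatten.sum (Pset B))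
        (Dset B ∪ (Des α).image (· + B.flatten.sum))]
      have hsplit := split_count B.flatten.sum α.sum hM hn (Pset B) (Dset B) (Des α)
        (Pset_subset hcompB) (Dset_subset hcompB)
      rw [hsplit, ih hB hcompB]
      -- now handle RHS
      have hgetD : ∀ j < B.length, ((B ++ [α]).getD j []).sum = (B.getD j []).sum := by
        intro j hj; rw [List.getD_append _ _ _ _ hj]
      rw [show (B ++ [α]).length = B.length + 1 by simp, Finset.range_add_one,
        Nat.multinomial_insert (by simp)]
      have e1 : ((B ++ [α]).getD B.length []).sum = α.sum := by simp
      have e2 : ∑ i ∈ Finset.range B.length, ((B ++ [α]).getD i []).sum = B.flatten.sum := by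
        rw [Finset.sum_congr rfl (fun i hi => hgetD i (Finset.mem_range.mp hi)), sum_getD]
      have e3 : Nat.multinomial (Finset.range B.length) (fun j => ((B ++ [α]).getD j []).sum)
          = Nat.multinomial (Finset.range B.length) (fun j => (B.getD j []).sum) :=
        multinomial_congr' (fun i hi => hgetD i (Finset.mem_range.mp hi))
      rw [e1, e2, e3]
      have e4 : ((B ++ [α]).map (fun β => fNum β.sum (Des β))).prod
          = (B.map (fun β => fNum β.sum (Des β))).prod * fNum α.sum (Des α) := by simp
      rw [e4]
      have e5 : (α.sum + B.flatten.sum).choose α.sum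
          = (B.flatten.sum + α.sum).choose B.flatten.sum := by
        rw [Nat.choose_symm_add, add_comm]
      rw [e5]
      have e6 : (Finset.univ.filter
          (fun v : Equiv.Perm (Fin α.sum) => permDes v = Des α)).card = fNum α.sum (Des α) := rfl
      rw [e6]
      ring
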